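/- arXiv:1410.8567 — 2 statements merged into one kernel-verified Lean document; each statement's English description precedes it below -/
import Mathlib

section
/- Let n ≥ 1, v = (v_1,…,v_n) ∈ ℂ^n, x_1,…,x_{n−1} ∈ ℂ, and f_2,…,f_n ∈ ℂ \ {0}. Define Φ ∈ M_n(ℂ) by: Φ_{ii} = x_i for 1 ≤ i ≤ n−1; Φ_{i,i+1} = f_{i+1} for 1 ≤ i ≤ n−1; Φ_{nℓ} = −Δ^{ℓ−1}P_{[v]}(x_1,…,x_ℓ)/(f_{ℓ+1}⋯f_n) for 1 ≤ ℓ ≤ n−1; Φ_{nn} = v_1 − (x_1 + ⋯ + x_{n−1}); and Φ_{ij} = 0 for all other pairs (i,j). Then det(tI_n − Φ) = P_{[v]}(t) as polynomials in t; equivalently, π(Φ) = v. -/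
open Polynomial

noncomputable section

/-- The open unit disc in `ℂ`. -/
def unitDisc : Set ℂ := Metric.ball 0 1

/-- `g(ζ) = O((ζ-α)^d)` at `α`: for a function holomorphic near `α`, vanishing
to order at least `d`, i.e. all derivatives of order `< d` vanish at `α`. -/
def VanishesToOrder (g : ℂ → ℂ) (α : ℂ) (d : ℕ) : Prop :=
  ∀ i < d, iteratedDeriv i g α = 0

/-- The map `π : M_n(ℂ) → ℂ^n`, `π(A) = (σ_1(A), …, σ_n(A))`, where
`det(tI - A) = ∑_{j=0}^n (-1)^j σ_j(A) t^{n-j}`.  Index `i : Fin n` stands for `j = i+1`. -/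
def piCoef (n : ℕ) (A : Matrix (Fin n) (Fin n) ℂ) : Fin n → ℂ :=
  fun i => (-1 : ℂ) ^ ((i : ℕ) + 1) * (Matrix.charpoly A).coeff (n - ((i : ℕ) + 1))

/-- The spectral ball `Ω_n`: matrices whose eigenvalues (roots of the characteristic
polynomial) all have modulus `< 1`. -/
def SpectralBall (n : ℕ) : Set (Matrix (Fin n) (Fin n) ℂ) :=
  { A | ∀ z ∈ (Matrix.charpoly A).roots, ‖z‖ < 1 }

/-- The symmetrized polydisc `G_n = π(Ω_n)`. -/
def SymPolydisc (n : ℕ) : Set (Fin n → ℂ) := piCoef n '' SpectralBall n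

/-- `P_{[v]}(t) = t^n + ∑_{j=1}^n (-1)^j v_j t^{n-j}`. -/
def Pv (n : ℕ) (v : Fin n → ℂ) : Polynomial ℂ :=
  X ^ n + ∑ i : Fin n, C ((-1 : ℂ) ^ ((i : ℕ) + 1) * v i) * X ^ (n - ((i : ℕ) + 1))

/-- `k`-th derivative of a polynomial with respect to the indeterminate. -/
def polyDeriv (k : ℕ) (P : Polynomial ℂ) : Polynomial ℂ :=
  (fun Q : Polynomial ℂ => Polynomial.derivative Q)^[k] P

/-- A matrix is cyclic (non-derogatory) if some vector has iterates spanning `ℂ^n`. -/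
def IsCyclicMatrix {n : ℕ} (M : Matrix (Fin n) (Fin n) ℂ) : Prop :=
  ∃ v : Fin n → ℂ, Submodule.span ℂ { w : Fin n → ℂ | ∃ k : ℕ, w = (M ^ k).mulVec v } = ⊤

open scoped Classical in
/-- `d_i(B) = 1 + #{ j : m-i+2 ≤ j ≤ m, B_{j-1,j} = 0 }` (1-indexed entries). -/
def dIdx {m : ℕ} (B : Matrix (Fin m) (Fin m) ℂ) (i : ℕ) : ℕ :=
  1 + ((Finset.Icc (m - i + 2) m).filter
      (fun j => ∀ (h1 : j - 2 < m) (h2 : j - 1 < m), B ⟨j - 2, h1⟩ ⟨j - 1, h2⟩ = 0)).card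

open scoped Classical in
/-- A single-eigenvalue Jordan matrix with eigenvalue `lam`: diagonal entries `lam`,
superdiagonal entries `0` or `1`, all other entries `0`, and the sizes of the consecutive
Jordan blocks (delimited by the vanishing superdiagonal entries) nondecreasing.
The list `L` records the consecutive Jordan block sizes; the superdiagonal entry in
(0-indexed) column `j` vanishes exactly when `j` is a proper partial sum of `L`. -/
def IsSingleJordan {m : ℕ} (B : Matrix (Fin m) (Fin m) ℂ) (lam : ℂ) : Prop :=
  (∀ i, B i i = lam) ∧
  (∀ i j : Fin m, (j : ℕ) ≠ (i : ℕ) → (j : ℕ) ≠ (i : ℕ) + 1 → B i j = 0) ∧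
  ∃ L : List ℕ, (∀ x ∈ L, 0 < x) ∧ L.sum = m ∧ L.Pairwise (· ≤ ·) ∧
    ∀ i j : Fin m, (j : ℕ) = (i : ℕ) + 1 →
      B i j = if (∃ t, 0 < t ∧ t < L.length ∧ (L.take t).sum = (j : ℕ)) then 0 else 1

/-- Partial sums `n_t = m_1 + ⋯ + m_t` of block sizes. -/
def nsum {s : ℕ} (m : Fin s → ℕ) (t : ℕ) : ℕ :=
  ∑ j ∈ Finset.univ.filter (fun j : Fin s => (j : ℕ) < t), m j

/-- `A = diag(B_1, …, B_s)` is a block Jordan matrix with single-eigenvalue Jordan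
blocks `B j` of size `m j` and pairwise distinct eigenvalues `lam j`. -/
def IsBlockJordan {n s : ℕ} (m : Fin s → ℕ) (lam : Fin s → ℂ)
    (B : ∀ j : Fin s, Matrix (Fin (m j)) (Fin (m j)) ℂ)
    (A : Matrix (Fin n) (Fin n) ℂ) : Prop :=
  (∑ j, m j) = n ∧ Function.Injective lam ∧ (∀ j, 0 < m j) ∧
  (∀ j, IsSingleJordan (B j) (lam j)) ∧
  (∀ (j : Fin s) (a b : Fin (m j)) (h1 : nsum m (j : ℕ) + (a : ℕ) < n)
      (h2 : nsum m (j : ℕ) + (b : ℕ) < n),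
      A ⟨nsum m (j : ℕ) + (a : ℕ), h1⟩ ⟨nsum m (j : ℕ) + (b : ℕ), h2⟩ = B j a b) ∧
  (∀ (i k : Fin n) (j j' : Fin s), j ≠ j' →
      nsum m (j : ℕ) ≤ (i : ℕ) → (i : ℕ) < nsum m ((j : ℕ) + 1) →
      nsum m (j' : ℕ) ≤ (k : ℕ) → (k : ℕ) < nsum m ((j' : ℕ) + 1) →
      A i k = 0)

/-- The conditions (★) at `α` relative to a block Jordan matrix with data `m, lam, B`:
`(d^k P_{[φ(ζ)]}/dt^k)(λ_j) = O((ζ-α)^{d_{m_j-k}(B_j)})` for `1 ≤ j ≤ s`, `0 ≤ k ≤ m_j - 1`. -/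
def StarConditions {n s : ℕ} (m : Fin s → ℕ) (lam : Fin s → ℂ)
    (B : ∀ j : Fin s, Matrix (Fin (m j)) (Fin (m j)) ℂ)
    (φ : ℂ → Fin n → ℂ) (α : ℂ) : Prop :=
  ∀ (j : Fin s), ∀ k < m j,
    VanishesToOrder (fun ζ => (polyDeriv k (Pv n (φ ζ))).eval (lam j)) α
      (dIdx (B j) (m j - k))

/-- Sum of all monomials of degree `d` in `k` variables (complete homogeneous symmetric sum). -/
def homogSum (k d : ℕ) (x : Fin k → ℂ) : ℂ :=
  ∑ c ∈ Finset.Nat.antidiagonalTuple k d, ∏ i, x i ^ c i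

/-- Divided difference `Δ^k P (x_1, …, x_{k+1}) = ∑_{j≥k} a_j ∑_{i_1+⋯+i_{k+1}=j-k} x^i`. -/
def divDiff (P : Polynomial ℂ) (k : ℕ) (x : Fin (k + 1) → ℂ) : ℂ :=
  ∑ j ∈ Finset.Icc k P.natDegree, P.coeff j * homogSum (k + 1) (j - k) x

/-- The Lempert function of the spectral ball. -/
def lempertOmega (n : ℕ) (A B : Matrix (Fin n) (Fin n) ℂ) : ℝ :=
  sInf { r : ℝ | ∃ α ∈ unitDisc, r = ‖α‖ ∧
    ∃ Φ : ℂ → Matrix (Fin n) (Fin n) ℂ,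
      (∀ i j, DifferentiableOn ℂ (fun ζ => Φ ζ i j) unitDisc) ∧
      Set.MapsTo Φ unitDisc (SpectralBall n) ∧ Φ α = A ∧ Φ 0 = B }

/-- The matrix `B_k^λ(ζ)`. -/
def Bmat (k : ℕ) (lam ζ : ℂ) : Matrix (Fin k) (Fin k) ℂ :=
  Matrix.of fun i j =>
    if (j : ℕ) = (i : ℕ) then lam
    else if (j : ℕ) = (i : ℕ) + 1 then (if (i : ℕ) = k - 2 then 1 else ζ)
    else if (i : ℕ) = k - 1 ∧ (j : ℕ) = 0 then ζ
    else 0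

/-- The block diagonal matrix `diag(B_k^{λ_1}(ζ), B_l^{λ_2}(ζ))` as an `(k+l)×(k+l)` matrix. -/
def BmatPair (k l : ℕ) (lam1 lam2 ζ : ℂ) : Matrix (Fin (k + l)) (Fin (k + l)) ℂ :=
  Matrix.reindex finSumFinEquiv finSumFinEquiv
    (Matrix.fromBlocks (Bmat k lam1 ζ) 0 0 (Bmat l lam2 ζ))

end

section Homog

lemma homogSum_zero (k : ℕ) (x : Fin k → ℂ) : homogSum k 0 x = 1 := by
  simp [homogSum, Finset.Nat.antidiagonalTuple_zero_right]

lemma homogSum_nil (d : ℕ) (x : Fin 0 → ℂ) : homogSum 0 (d + 1) x = 0 := by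
  simp [homogSum]

lemma homogSum_succ (k d : ℕ) (x : Fin (k + 1) → ℂ) :
    homogSum (k + 1) (d + 1) x
      = x 0 * homogSum (k + 1) d x + homogSum k (d + 1) (x ∘ Fin.succ) := by
  classical
  unfold homogSum
  rw [← Finset.sum_filter_add_sum_filter_not (Finset.Nat.antidiagonalTuple (k+1) (d+1))
    (fun c => c 0 = 0)]
  have h1 : ∑ c ∈ (Finset.Nat.antidiagonalTuple (k+1) (d+1)).filter (fun c => c 0 = 0),
      ∏ i, x i ^ c i = ∑ c ∈ Finset.Nat.antidiagonalTuple k (d+1), ∏ i, (x ∘ Fin.succ) i ^ c i := by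
    apply Finset.sum_nbij' (i := fun c => c ∘ Fin.succ) (j := fun c => Fin.cons 0 c)
    · intro c hc
      simp only [Finset.mem_filter, Finset.Nat.mem_antidiagonalTuple] at hc
      rw [Finset.Nat.mem_antidiagonalTuple]
      rw [← hc.1, Fin.sum_univ_succ, hc.2, zero_add]
      rfl
    · intro c hc
      rw [Finset.Nat.mem_antidiagonalTuple] at hc
      simp only [Finset.mem_filter, Finset.Nat.mem_antidiagonalTuple, Fin.cons_zero, and_true]
      rw [Fin.sum_univ_succ, Fin.cons_zero, zero_add]
      simpa using hc
    · intro c hc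
      simp only [Finset.mem_filter] at hc
      funext i
      cases i using Fin.cases with
      | zero => simp [hc.2]
      | succ i => simp
    · intro c _
      funext i
      simp
    · intro c hc
      simp only [Finset.mem_filter] at hc
      rw [Fin.prod_univ_succ, hc.2, pow_zero, one_mul]
      rfl
  have h2 : ∑ c ∈ (Finset.Nat.antidiagonalTuple (k+1) (d+1)).filter (fun c => ¬ c 0 = 0),
      ∏ i, x i ^ c i = x 0 * ∑ c ∈ Finset.Nat.antidiagonalTuple (k+1) d, ∏ i, x i ^ c i := by
    rw [Finset.mul_sum]
    apply Finset.sum_nbij' (i := fun c => Fin.cons (c 0 - 1) (c ∘ Fin.succ))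
      (j := fun c => Fin.cons (c 0 + 1) (c ∘ Fin.succ))
    · intro c hc
      simp only [Finset.mem_filter, Finset.Nat.mem_antidiagonalTuple] at hc
      rw [Finset.Nat.mem_antidiagonalTuple, Fin.sum_univ_succ, Fin.cons_zero]
      simp only [Fin.cons_succ, Function.comp_apply]
      obtain ⟨h1', h0⟩ := hc
      rw [Fin.sum_univ_succ] at h1'
      omega
    · intro c hc
      rw [Finset.Nat.mem_antidiagonalTuple] at hc
      simp only [Finset.mem_filter, Finset.Nat.mem_antidiagonalTuple, Fin.cons_zero]
      rw [Fin.sum_univ_succ, Fin.cons_zero]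
      simp only [Fin.cons_succ, Function.comp_apply]
      rw [Fin.sum_univ_succ] at hc
      omega
    · intro c hc
      simp only [Finset.mem_filter] at hc
      funext i
      cases i using Fin.cases with
      | zero =>
        simp only [Fin.cons_zero]
        omega
      | succ i => simp
    · intro c _
      funext i
      cases i using Fin.cases with
      | zero => simp
      | succ i => simp
    · intro c hc
      simp only [Finset.mem_filter] at hc
      rw [Fin.prod_univ_succ, Fin.prod_univ_succ]
      simp only [Fin.cons_zero, Fin.cons_succ, Function.comp_apply]
      have h0 : c 0 - 1 + 1 = c 0 := by omega
      rw [← mul_assoc, ← pow_succ', h0]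
  rw [h1, h2]
  ring

lemma homogSum_single (d : ℕ) (y : Fin 1 → ℂ) : homogSum 1 d y = y 0 ^ d := by
  induction d with
  | zero => simp [homogSum_zero]
  | succ d ih =>
    rw [homogSum_succ, ih, homogSum_nil]
    ring

lemma homogSum_one (k : ℕ) (x : Fin k → ℂ) : homogSum k 1 x = ∑ i, x i := by
  induction k with
  | zero =>
    have := homogSum_nil 0 x
    simp only [Nat.zero_add] at this
    simp [this]
  | succ k ih =>
    have h := homogSum_succ k 0 x
    simp only [Nat.zero_add] at h
    rw [h, homogSum_zero, ih, Fin.sum_univ_succ]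
    simp [Function.comp]

end Homog

section Homog2

lemma homogSum_key (k : ℕ) (t s : ℂ) (y : Fin k → ℂ) (d : ℕ) :
    homogSum (k + 1) (d + 1) (Fin.cons t y) - homogSum (k + 1) (d + 1) (Fin.cons s y)
      = (t - s) * homogSum (k + 2) d (Fin.cons t (Fin.cons s y)) := by
  have tailt : (Fin.cons t y : Fin (k+1) → ℂ) ∘ Fin.succ = y := by
    funext i; simp
  have tails : (Fin.cons s y : Fin (k+1) → ℂ) ∘ Fin.succ = y := by
    funext i; simp
  have tailts : (Fin.cons t (Fin.cons s y) : Fin (k+2) → ℂ) ∘ Fin.succ = Fin.cons s y := by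
    funext i; simp
  induction d with
  | zero =>
    have h1 := homogSum_succ k 0 (Fin.cons t y)
    have h2 := homogSum_succ k 0 (Fin.cons s y)
    simp only [Nat.zero_add] at h1 h2
    rw [h1, h2, homogSum_zero, homogSum_zero, tailt, tails, homogSum_zero, Fin.cons_zero,
      Fin.cons_zero]
    ring
  | succ d ih =>
    rw [homogSum_succ (k) (d+1) (Fin.cons t y), homogSum_succ (k) (d+1) (Fin.cons s y),
      homogSum_succ (k+1) d (Fin.cons t (Fin.cons s y)), tailt, tails, tailts,
      Fin.cons_zero, Fin.cons_zero, Fin.cons_zero]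
    linear_combination t * ih

end Homog2

section Homog3

lemma homogSum_comp_perm (k d : ℕ) (x : Fin k → ℂ) (e : Equiv.Perm (Fin k)) :
    homogSum k d (x ∘ e) = homogSum k d x := by
  unfold homogSum
  apply Finset.sum_nbij' (i := fun c => c ∘ e.symm) (j := fun c => c ∘ e)
  · intro c hc
    rw [Finset.Nat.mem_antidiagonalTuple] at hc ⊢
    rw [← hc]
    exact Equiv.sum_comp e.symm c
  · intro c hc
    rw [Finset.Nat.mem_antidiagonalTuple] at hc ⊢
    rw [← hc]
    exact Equiv.sum_comp e c
  · intro c _; funext i; simp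
  · intro c _; funext i; simp
  · intro c _
    rw [← Equiv.prod_comp e (fun i => x i ^ (c ∘ e.symm) i)]
    exact Finset.prod_congr rfl fun i _ => by simp

lemma homogSum_cons_congr {k : ℕ} {u w : Fin k → ℂ}
    (h : ∀ d, homogSum k d u = homogSum k d w) (a : ℂ) (d : ℕ) :
    homogSum (k + 1) d (Fin.cons a u) = homogSum (k + 1) d (Fin.cons a w) := by
  have tu : (Fin.cons a u : Fin (k+1) → ℂ) ∘ Fin.succ = u := by funext i; simp
  have tw : (Fin.cons a w : Fin (k+1) → ℂ) ∘ Fin.succ = w := by funext i; simp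
  induction d with
  | zero => rw [homogSum_zero, homogSum_zero]
  | succ d ih =>
    rw [homogSum_succ, homogSum_succ, tu, tw, ih, h, Fin.cons_zero, Fin.cons_zero]

lemma divDiff_comp_perm (P : Polynomial ℂ) (k : ℕ) (x : Fin (k + 1) → ℂ)
    (e : Equiv.Perm (Fin (k + 1))) : divDiff P k (x ∘ e) = divDiff P k x := by
  unfold divDiff
  exact Finset.sum_congr rfl fun j _ => by rw [homogSum_comp_perm]

lemma divDiff_cons_congr (P : Polynomial ℂ) (k : ℕ) {u w : Fin (k + 1) → ℂ}
    (h : ∀ d, homogSum (k + 1) d u = homogSum (k + 1) d w) (a : ℂ) :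
    divDiff P (k + 1) (Fin.cons a u) = divDiff P (k + 1) (Fin.cons a w) := by
  unfold divDiff
  exact Finset.sum_congr rfl fun j _ => by rw [homogSum_cons_congr h]

lemma divDiff_sub (P : Polynomial ℂ) (k : ℕ) (t s : ℂ) (y : Fin k → ℂ) :
    divDiff P k (Fin.cons t y)
      = divDiff P k (Fin.cons s y)
        + (t - s) * divDiff P (k + 1) (Fin.cons t (Fin.cons s y)) := by
  rw [← sub_eq_iff_eq_add']
  unfold divDiff
  rw [← Finset.sum_sub_distrib, Finset.mul_sum]
  have hsub : Finset.Icc (k+1) P.natDegree ⊆ Finset.Icc k P.natDegree := by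
    apply Finset.Icc_subset_Icc (by omega) le_rfl
  refine ((Finset.sum_subset hsub ?_).symm).trans (Finset.sum_congr rfl ?_)
  · intro j hj hj'
    rw [Finset.mem_Icc] at hj
    simp only [Finset.mem_Icc, not_and, not_le] at hj'
    have : j = k := by omega
    subst this
    simp [homogSum_zero]
  · intro j hj
    rw [Finset.mem_Icc] at hj
    have hj1 : j - k = (j - (k + 1)) + 1 := by omega
    rw [hj1, ← mul_sub, homogSum_key]
    ring

end Homog3

section Newton

lemma newton_eval (P : Polynomial ℂ) (m : ℕ) (hdeg : P.natDegree = m + 1) (x : ℕ → ℂ) (t : ℂ) :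
    P.eval t
      = (∑ j ∈ Finset.range m,
          divDiff P j (fun i : Fin (j + 1) => x ((i : ℕ) + 1))
            * ∏ i ∈ Finset.range j, (t - x (i + 1)))
        + (P.coeff m + P.coeff (m + 1) * (t + ∑ i ∈ Finset.range m, x (i + 1)))
            * ∏ i ∈ Finset.range m, (t - x (i + 1)) := by
  set g : ℕ → ℂ := fun k => divDiff P k (Fin.cons t (fun i : Fin k => x ((i : ℕ) + 1))) with hg
  have hg0 : g 0 = P.eval t := by
    simp only [hg]
    unfold divDiff
    rw [Polynomial.eval_eq_sum_range]
    rw [show Finset.Icc 0 P.natDegree = Finset.range (P.natDegree + 1) from by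
      ext a; simp]
    apply Finset.sum_congr rfl
    intro j _
    rw [Nat.sub_zero, homogSum_single, Fin.cons_zero]
  have hperm : ∀ k, (fun i : Fin (k + 1) => x ((i : ℕ) + 1))
      = (Fin.cons (x (k + 1)) (fun i : Fin k => x ((i : ℕ) + 1)) : Fin (k+1) → ℂ)
          ∘ (finRotate (k + 1)) := by
    intro k
    funext i
    induction i using Fin.lastCases with
    | last => simp [finRotate_last]
    | cast i => simp [finRotate_succ_apply, Fin.coeSucc_eq_succ]
  have hrec : ∀ k, g k = divDiff P k (fun i : Fin (k + 1) => x ((i : ℕ) + 1))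
      + (t - x (k + 1)) * g (k + 1) := by
    intro k
    simp only [hg]
    rw [divDiff_sub P k t (x (k + 1)) (fun i : Fin k => x ((i : ℕ) + 1))]
    congr 1
    · rw [hperm k, divDiff_comp_perm]
    · congr 1
      apply divDiff_cons_congr
      intro d
      rw [hperm k, homogSum_comp_perm]
  have htop : g m = P.coeff m + P.coeff (m + 1) * (t + ∑ i ∈ Finset.range m, x (i + 1)) := by
    simp only [hg]
    unfold divDiff
    rw [hdeg, show Finset.Icc m (m + 1) = {m, m + 1} from by ext a; simp; omega]
    rw [Finset.sum_insert (by simp), Finset.sum_singleton]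
    rw [Nat.sub_self, homogSum_zero, show m + 1 - m = 1 from by omega, homogSum_one]
    rw [Fin.sum_univ_succ, Fin.cons_zero]
    simp only [Fin.cons_succ]
    rw [Fin.sum_univ_eq_sum_range (fun i => x (i + 1)) m]
    ring
  have hunroll : ∀ K, P.eval t
      = (∑ j ∈ Finset.range K,
          divDiff P j (fun i : Fin (j + 1) => x ((i : ℕ) + 1))
            * ∏ i ∈ Finset.range j, (t - x (i + 1)))
        + g K * ∏ i ∈ Finset.range K, (t - x (i + 1)) := by
    intro K
    induction K with
    | zero => simp [hg0.symm]
    | succ K ih =>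
      rw [ih, hrec K, Finset.sum_range_succ, Finset.prod_range_succ]
      ring
  rw [hunroll m, htop]

end Newton

section PvLemmas

lemma Pv_degree_sum_lt (m : ℕ) (v : Fin (m + 1) → ℂ) :
    (∑ i : Fin (m + 1), C ((-1 : ℂ) ^ ((i : ℕ) + 1) * v i) * X ^ (m + 1 - ((i : ℕ) + 1))).degree
      < ((m + 1 : ℕ) : WithBot ℕ) := by
  apply lt_of_le_of_lt (Polynomial.degree_sum_le _ _)
  rw [Finset.sup_lt_iff (by exact_mod_cast WithBot.bot_lt_coe (m + 1))]
  intro i _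
  apply lt_of_le_of_lt (Polynomial.degree_C_mul_X_pow_le _ _)
  exact_mod_cast Nat.lt_succ_of_le (by omega)

lemma Pv_natDegree (m : ℕ) (v : Fin (m + 1) → ℂ) : (Pv (m + 1) v).natDegree = m + 1 := by
  apply Polynomial.natDegree_eq_of_degree_eq_some
  unfold Pv
  rw [Polynomial.degree_add_eq_left_of_degree_lt, Polynomial.degree_X_pow]
  rw [Polynomial.degree_X_pow]
  exact Pv_degree_sum_lt m v

lemma Pv_coeff_top (m : ℕ) (v : Fin (m + 1) → ℂ) : (Pv (m + 1) v).coeff (m + 1) = 1 := by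
  unfold Pv
  rw [Polynomial.coeff_add, Polynomial.coeff_X_pow, if_pos rfl, Polynomial.finset_sum_coeff]
  rw [Finset.sum_eq_zero, add_zero]
  intro i _
  have := i.isLt
  rw [Polynomial.coeff_C_mul, Polynomial.coeff_X_pow, if_neg (by omega), mul_zero]

lemma Pv_coeff_m (m : ℕ) (v : Fin (m + 1) → ℂ) : (Pv (m + 1) v).coeff m = -v 0 := by
  unfold Pv
  rw [Polynomial.coeff_add, Polynomial.coeff_X_pow, if_neg (by omega),
    Polynomial.finset_sum_coeff, zero_add]
  rw [Finset.sum_eq_single (0 : Fin (m + 1))]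
  · simp
  · intro i _ hne
    have := i.isLt
    have hi : (i : ℕ) ≠ 0 := fun h => hne (Fin.ext h)
    rw [Polynomial.coeff_C_mul, Polynomial.coeff_X_pow, if_neg (by omega), mul_zero]
  · intro h
    exact absurd (Finset.mem_univ _) h

end PvLemmas

section MatrixPart

lemma minor_det (m : ℕ) (t : ℂ) (xx ff : ℕ → ℂ) (N : Matrix (Fin (m + 1)) (Fin (m + 1)) ℂ)
    (hN : ∀ (i : Fin m) (p : Fin (m + 1)),
      N i.castSucc p = if (p : ℕ) = (i : ℕ) then t - xx ((i : ℕ) + 1)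
        else if (p : ℕ) = (i : ℕ) + 1 then -ff ((i : ℕ) + 2) else 0)
    (j : Fin (m + 1)) :
    (N.submatrix Fin.castSucc j.succAbove).det
      = ∏ i : Fin m,
          (if (i : ℕ) < (j : ℕ) then t - xx ((i : ℕ) + 1) else -ff ((i : ℕ) + 2)) := by
  have hj : (j : ℕ) ≤ m := Nat.lt_succ_iff.mp j.isLt
  have hsa : ∀ p : Fin m, ((j.succAbove p : Fin (m + 1)) : ℕ)
      = if (p : ℕ) < (j : ℕ) then (p : ℕ) else (p : ℕ) + 1 := by
    intro p
    rcases lt_or_ge ((p : ℕ)) ((j : ℕ)) with h | h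
    · rw [if_pos h, Fin.succAbove_of_castSucc_lt, Fin.coe_castSucc]
      exact (by simpa [Fin.lt_def] using h)
    · rw [if_neg (not_lt.mpr h), Fin.succAbove_of_le_castSucc, Fin.val_succ]
      exact (by simpa [Fin.le_def] using h)
  have hent : ∀ a b : Fin m, (N.submatrix Fin.castSucc j.succAbove) a b
      = if (if (b : ℕ) < (j : ℕ) then (b : ℕ) else (b : ℕ) + 1) = (a : ℕ)
          then t - xx ((a : ℕ) + 1)
        else if (if (b : ℕ) < (j : ℕ) then (b : ℕ) else (b : ℕ) + 1) = (a : ℕ) + 1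
          then -ff ((a : ℕ) + 2) else 0 := by
    intro a b
    rw [Matrix.submatrix_apply, hN, hsa]
  set G : Fin m → Fin m := fun i =>
    ⟨if (i : ℕ) < (j : ℕ) then (i : ℕ) else (j : ℕ) + m - 1 - (i : ℕ),
      by have := i.isLt; split <;> omega⟩ with hGdef
  have hGval : ∀ i : Fin m, (G i : ℕ)
      = if (i : ℕ) < (j : ℕ) then (i : ℕ) else (j : ℕ) + m - 1 - (i : ℕ) := fun i => rfl
  have hGinv : Function.Involutive G := by
    intro i
    apply Fin.ext
    rw [hGval, hGval]
    have := i.isLt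
    split_ifs <;> omega
  set e : Equiv.Perm (Fin m) := hGinv.toPerm G with hedef
  have hecoe : ∀ i, e i = G i := fun i => rfl
  have htri : ((N.submatrix Fin.castSucc j.succAbove).submatrix e e).BlockTriangular id := by
    intro a b hab
    have hba : (b : ℕ) < (a : ℕ) := hab
    rw [Matrix.submatrix_apply, hecoe, hecoe, hent]
    rw [hGval, hGval]
    have ha := a.isLt
    have hb := b.isLt
    split_ifs <;> first | rfl | (exfalso; omega)
  have hdiag : ∀ i : Fin m, (N.submatrix Fin.castSucc j.succAbove) i i
      = if (i : ℕ) < (j : ℕ) then t - xx ((i : ℕ) + 1) else -ff ((i : ℕ) + 2) := by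
    intro i
    rw [hent]
    have := i.isLt
    split_ifs <;> first | rfl | (exfalso; omega)
  rw [← Matrix.det_submatrix_equiv_self e (N.submatrix Fin.castSucc j.succAbove)]
  rw [Matrix.det_of_upperTriangular htri]
  have : ∀ i : Fin m, ((N.submatrix Fin.castSucc j.succAbove).submatrix e e) i i
      = (fun k : Fin m => if (k : ℕ) < (j : ℕ) then t - xx ((k : ℕ) + 1)
          else -ff ((k : ℕ) + 2)) (e i) := by
    intro i
    rw [Matrix.submatrix_apply, hdiag]
  rw [Finset.prod_congr rfl fun i _ => this i]
  exact Equiv.prod_comp e (fun k : Fin m =>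
    if (k : ℕ) < (j : ℕ) then t - xx ((k : ℕ) + 1) else -ff ((k : ℕ) + 2))

end MatrixPart

/-- Proposition 4.4: the characteristic polynomial of the "lifting formula"
matrix `Φ` equals `P_{[v]}`, i.e. `π(Φ) = v`. -/
theorem statement10 (n : ℕ) (hn : 1 ≤ n) (v : Fin n → ℂ) (x f : ℕ → ℂ)
    (hf : ∀ i, 2 ≤ i → i ≤ n → f i ≠ 0)
    (Φ : Matrix (Fin n) (Fin n) ℂ)
    (hΦ : ∀ i j : Fin n, Φ i j =
      if (i : ℕ) + 1 < n then
        (if (j : ℕ) = (i : ℕ) then x ((i : ℕ) + 1)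
         else if (j : ℕ) = (i : ℕ) + 1 then f ((i : ℕ) + 2) else 0)
      else
        (if (j : ℕ) + 1 < n then
          -divDiff (Pv n v) (j : ℕ) (fun t : Fin ((j : ℕ) + 1) => x ((t : ℕ) + 1)) /
            ∏ r ∈ Finset.Icc ((j : ℕ) + 2) n, f r
         else v ⟨0, hn⟩ - ∑ r ∈ Finset.Icc 1 (n - 1), x r)) :
    Matrix.charpoly Φ = Pv n v := by
  obtain ⟨m, rfl⟩ : ∃ m, n = m + 1 := ⟨n - 1, by omega⟩
  apply Polynomial.funext
  intro t
  have hmap : (Matrix.charmatrix Φ).map (Polynomial.eval t)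
      = Matrix.of (fun i k : Fin (m + 1) => (if i = k then t else 0) - Φ i k) := by
    ext i k
    by_cases h : i = k
    · subst h
      simp [Matrix.charmatrix_apply_eq]
    · simp [Matrix.charmatrix_apply_ne _ _ _ h, h]
  have hchar : (Matrix.charpoly Φ).eval t
      = (Matrix.of (fun i k : Fin (m + 1) => (if i = k then t else 0) - Φ i k)).det := by
    rw [Matrix.charpoly, ← hmap]
    have h1 := RingHom.map_det (Polynomial.evalRingHom t) (Matrix.charmatrix Φ)
    simpa using h1
  rw [hchar]
  set N := Matrix.of (fun i k : Fin (m + 1) => (if i = k then t else 0) - Φ i k) with hNdef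
  have hΦrow : ∀ (i : Fin m) (p : Fin (m + 1)),
      N i.castSucc p = if (p : ℕ) = (i : ℕ) then t - x ((i : ℕ) + 1)
        else if (p : ℕ) = (i : ℕ) + 1 then -f ((i : ℕ) + 2) else 0 := by
    intro i p
    rw [hNdef]
    simp only [Matrix.of_apply]
    rw [hΦ]
    rw [if_pos (show ((i.castSucc : Fin (m + 1)) : ℕ) + 1 < m + 1 by
      simp only [Fin.coe_castSucc]; omega)]
    simp only [Fin.ext_iff, Fin.coe_castSucc]
    have := i.isLt
    have := p.isLt
    split_ifs <;> first | (exfalso; omega) | ring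
  have hlastc : ∀ p : Fin m, N (Fin.last m) p.castSucc
      = divDiff (Pv (m + 1) v) (p : ℕ) (fun i : Fin ((p : ℕ) + 1) => x ((i : ℕ) + 1)) /
          ∏ r ∈ Finset.Icc ((p : ℕ) + 2) (m + 1), f r := by
    intro p
    rw [hNdef]
    simp only [Matrix.of_apply]
    rw [hΦ]
    rw [if_neg (show ¬(((Fin.last m : Fin (m + 1)) : ℕ) + 1 < m + 1) by
      simp [Fin.val_last])]
    rw [if_pos (show ((p.castSucc : Fin (m + 1)) : ℕ) + 1 < m + 1 by
      simp only [Fin.coe_castSucc]; omega)]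
    rw [if_neg (show ¬(Fin.last m = p.castSucc) by
      simp only [Fin.ext_iff, Fin.val_last, Fin.coe_castSucc]; omega)]
    simp only [Fin.coe_castSucc]
    ring
  have hlastlast : N (Fin.last m) (Fin.last m)
      = t - (v ⟨0, hn⟩ - ∑ r ∈ Finset.Icc 1 m, x r) := by
    rw [hNdef]
    simp only [Matrix.of_apply]
    rw [hΦ]
    rw [if_neg (show ¬(((Fin.last m : Fin (m + 1)) : ℕ) + 1 < m + 1) by
      simp [Fin.val_last])]
    rw [if_neg (show ¬(((Fin.last m : Fin (m + 1)) : ℕ) + 1 < m + 1) by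
      simp [Fin.val_last])]
    simp
  rw [Matrix.det_succ_row N (Fin.last m)]
  simp only [Fin.succAbove_last]
  have hmin : ∀ p : Fin (m + 1), (N.submatrix Fin.castSucc p.succAbove).det
      = ∏ i : Fin m,
          (if (i : ℕ) < (p : ℕ) then t - x ((i : ℕ) + 1) else -f ((i : ℕ) + 2)) :=
    minor_det m t x f N hΦrow
  simp only [hmin, Fin.val_last]
  rw [Fin.sum_univ_castSucc]
  -- the last term
  have hlastprod : ∏ i : Fin m,
      (if (i : ℕ) < ((Fin.last m : Fin (m + 1)) : ℕ) then t - x ((i : ℕ) + 1)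
        else -f ((i : ℕ) + 2)) = ∏ i ∈ Finset.range m, (t - x (i + 1)) := by
    rw [Finset.prod_congr rfl (fun i (_ : i ∈ Finset.univ) =>
      if_pos (by simp only [Fin.val_last]; exact i.isLt))]
    exact Fin.prod_univ_eq_prod_range (fun i => t - x (i + 1)) m
  -- the generic terms
  have hterm : ∀ p : Fin m,
      (-1 : ℂ) ^ (m + ((p.castSucc : Fin (m + 1)) : ℕ)) * N (Fin.last m) p.castSucc *
          ∏ i : Fin m, (if (i : ℕ) < ((p.castSucc : Fin (m + 1)) : ℕ)
            then t - x ((i : ℕ) + 1) else -f ((i : ℕ) + 2))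
        = divDiff (Pv (m + 1) v) (p : ℕ) (fun i : Fin ((p : ℕ) + 1) => x ((i : ℕ) + 1)) *
            ∏ i ∈ Finset.range (p : ℕ), (t - x (i + 1)) := by
    intro p
    rw [hlastc p]
    simp only [Fin.coe_castSucc]
    have hp : (p : ℕ) ≤ m := le_of_lt p.isLt
    have hprod1 : ∏ i : Fin m,
        (if (i : ℕ) < (p : ℕ) then t - x ((i : ℕ) + 1) else -f ((i : ℕ) + 2))
        = ∏ i ∈ Finset.range m, (if i < (p : ℕ) then t - x (i + 1) else -f (i + 2)) :=
      Fin.prod_univ_eq_prod_range (fun i => if i < (p : ℕ) then t - x (i + 1) else -f (i + 2)) m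
    rw [hprod1, show Finset.range m = Finset.Ico 0 m from Finset.range_eq_Ico m,
      ← Finset.prod_Ico_consecutive _ (Nat.zero_le (p : ℕ)) hp]
    have h2 : ∏ i ∈ Finset.Ico 0 (p : ℕ), (if i < (p : ℕ) then t - x (i + 1) else -f (i + 2))
        = ∏ i ∈ Finset.range (p : ℕ), (t - x (i + 1)) := by
      rw [← Finset.range_eq_Ico]
      exact Finset.prod_congr rfl (fun i hi => if_pos (Finset.mem_range.mp hi))
    have h3 : ∏ i ∈ Finset.Ico (p : ℕ) m, (if i < (p : ℕ) then t - x (i + 1) else -f (i + 2))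
        = (-1 : ℂ) ^ (m - (p : ℕ)) * ∏ r ∈ Finset.Icc ((p : ℕ) + 2) (m + 1), f r := by
      calc ∏ i ∈ Finset.Ico (p : ℕ) m, (if i < (p : ℕ) then t - x (i + 1) else -f (i + 2))
          = ∏ i ∈ Finset.Ico (p : ℕ) m, (-1 : ℂ) * f (i + 2) := by
            refine Finset.prod_congr rfl (fun i hi => ?_)
            rw [if_neg (not_lt.mpr (Finset.mem_Ico.mp hi).1)]
            ring
        _ = (-1 : ℂ) ^ (m - (p : ℕ)) * ∏ i ∈ Finset.Ico (p : ℕ) m, f (i + 2) := by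
            rw [Finset.prod_mul_distrib, Finset.prod_const, Nat.card_Ico]
        _ = (-1 : ℂ) ^ (m - (p : ℕ)) * ∏ r ∈ Finset.Icc ((p : ℕ) + 2) (m + 1), f r := by
            congr 1
            apply Finset.prod_nbij' (i := fun a => a + 2) (j := fun a => a - 2)
            · intro a ha
              rw [Finset.mem_Ico] at ha
              rw [Finset.mem_Icc]
              omega
            · intro a ha
              rw [Finset.mem_Icc] at ha
              rw [Finset.mem_Ico]
              omega
            · intro a _; omega
            · intro a ha
              rw [Finset.mem_Icc] at ha
              omega
            · intro a _; rfl
    rw [h2, h3]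
    have hF : ∏ r ∈ Finset.Icc ((p : ℕ) + 2) (m + 1), f r ≠ 0 := by
      rw [Finset.prod_ne_zero_iff]
      intro r hr
      rw [Finset.mem_Icc] at hr
      exact hf r (by omega) hr.2
    have hsign : (-1 : ℂ) ^ (m + (p : ℕ)) * (-1 : ℂ) ^ (m - (p : ℕ)) = 1 := by
      rw [← pow_add, show m + (p : ℕ) + (m - (p : ℕ)) = 2 * m from by omega, pow_mul]
      norm_num
    calc (-1 : ℂ) ^ (m + (p : ℕ)) *
          (divDiff (Pv (m + 1) v) (p : ℕ) (fun i : Fin ((p : ℕ) + 1) => x ((i : ℕ) + 1)) /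
            ∏ r ∈ Finset.Icc ((p : ℕ) + 2) (m + 1), f r) *
          ((∏ i ∈ Finset.range (p : ℕ), (t - x (i + 1))) *
            ((-1 : ℂ) ^ (m - (p : ℕ)) * ∏ r ∈ Finset.Icc ((p : ℕ) + 2) (m + 1), f r))
        = ((-1 : ℂ) ^ (m + (p : ℕ)) * (-1 : ℂ) ^ (m - (p : ℕ))) *
            ((divDiff (Pv (m + 1) v) (p : ℕ) (fun i : Fin ((p : ℕ) + 1) => x ((i : ℕ) + 1)) /
              ∏ r ∈ Finset.Icc ((p : ℕ) + 2) (m + 1), f r) *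
              ∏ r ∈ Finset.Icc ((p : ℕ) + 2) (m + 1), f r) *
            ∏ i ∈ Finset.range (p : ℕ), (t - x (i + 1)) := by ring
      _ = divDiff (Pv (m + 1) v) (p : ℕ) (fun i : Fin ((p : ℕ) + 1) => x ((i : ℕ) + 1)) *
            ∏ i ∈ Finset.range (p : ℕ), (t - x (i + 1)) := by
          rw [hsign, div_mul_cancel₀ _ hF, one_mul]
  rw [Finset.sum_congr rfl (fun p _ => hterm p)]
  rw [hlastlast, hlastprod]
  rw [Fin.sum_univ_eq_sum_range (fun j => divDiff (Pv (m + 1) v) j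
    (fun i : Fin (j + 1) => x ((i : ℕ) + 1)) * ∏ i ∈ Finset.range j, (t - x (i + 1))) m]
  rw [newton_eval (Pv (m + 1) v) m (Pv_natDegree m v) x t, Pv_coeff_m, Pv_coeff_top]
  have hv0 : v ⟨0, hn⟩ = v 0 := by
    congr 1
  have hIcc : ∑ r ∈ Finset.Icc 1 m, x r = ∑ i ∈ Finset.range m, x (i + 1) := by
    rw [show Finset.Icc 1 m = Finset.Ico 1 (m + 1) from by rw [Finset.Ico_add_one_right_eq_Icc]]
    rw [Finset.sum_Ico_eq_sum_range]
    simp only [Nat.add_sub_cancel]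
    exact Finset.sum_congr rfl (fun i _ => by rw [Nat.add_comm 1 i])
  rw [hv0, hIcc]
  simp only [Fin.val_last]
  rw [show ((-1 : ℂ) ^ (m + m) = 1) from Even.neg_one_pow ⟨m, rfl⟩]
  ring
end

section
/- Let k, l ≥ 2 be integers, n = k + l, let λ_1 ≠ λ_2 be complex numbers, let ε ∈ ℂ \ {0}, and define φ : D → ℂ^n by φ(ζ) := π(diag(B_k^{λ_1}(εζ), B_l^{λ_2}(εζ))). Then for every holomorphic function g defined on a neighborhood of 0 with g(0) = λ_1, the holomorphic function ζ ↦ P_{[φ(ζ)]}(g(ζ)) vanishes at 0 to order exactly k − 1. -/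
open Polynomial

section AuxProofs

open Polynomial Filter

private theorem iteratedDeriv_congr_nhds {f g : ℂ → ℂ} {x : ℂ} (h : f =ᶠ[nhds x] g) (n : ℕ) :
    iteratedDeriv n f x = iteratedDeriv n g x := by
  induction n generalizing f g with
  | zero => simpa using h.eq_of_nhds
  | succ n ih =>
    rw [iteratedDeriv_succ', iteratedDeriv_succ']
    exact ih h.deriv

private theorem analyticAt_deriv' {u : ℂ → ℂ} {x : ℂ} (hu : AnalyticAt ℂ u x) :
    AnalyticAt ℂ (deriv u) x := by
  obtain ⟨s, hs, hso⟩ := hu.eventually_analyticAt.exists_mem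
  exact (AnalyticOnNhd.deriv (fun y hy => hso y hy)) x (mem_of_mem_nhds hs)

private theorem vanish_aux : ∀ (m : ℕ) (f u : ℂ → ℂ), AnalyticAt ℂ u 0 →
    (f =ᶠ[nhds (0:ℂ)] fun z => z ^ m * u z) →
    (∀ i < m, iteratedDeriv i f 0 = 0) ∧ iteratedDeriv m f 0 = m.factorial * u 0 := by
  intro m
  induction m with
  | zero =>
    intro f u hu hf
    refine ⟨fun i hi => absurd hi (Nat.not_lt_zero i), ?_⟩
    simpa using hf.eq_of_nhds
  | succ m ih =>
    intro f u hu hf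
    have hd : deriv f =ᶠ[nhds (0:ℂ)]
        fun z => z ^ m * (((m:ℂ)+1) * u z + z * deriv u z) := by
      refine hf.deriv.trans ?_
      filter_upwards [hu.eventually_analyticAt] with z hz
      rw [deriv_fun_mul (differentiableAt_pow _) hz.differentiableAt, deriv_pow_field]
      push_cast
      ring
    have hv : AnalyticAt ℂ (fun z => ((m:ℂ)+1) * u z + z * deriv u z) 0 :=
      (analyticAt_const.mul hu).add (analyticAt_id.mul (analyticAt_deriv' hu))
    obtain ⟨h1, h2⟩ := ih (deriv f) _ hv hd
    constructor
    · intro i hi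
      match i with
      | 0 => simpa using hf.eq_of_nhds
      | (j+1) =>
        rw [iteratedDeriv_succ']
        exact h1 j (by omega)
    · rw [iteratedDeriv_succ', h2]
      simp only [mul_zero, zero_mul, add_zero, Nat.factorial_succ]
      push_cast
      ring

private theorem Pv_piCoef (n : ℕ) (A : Matrix (Fin n) (Fin n) ℂ) :
    Pv n (piCoef n A) = A.charpoly := by
  have hmon := A.charpoly_monic
  have hdeg : A.charpoly.natDegree = n := by
    rw [A.charpoly_natDegree_eq_dim, Fintype.card_fin]
  have key : ∑ i : Fin n, C ((-1 : ℂ) ^ ((i : ℕ) + 1) * piCoef n A i) * X ^ (n - ((i : ℕ) + 1))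
      = ∑ i ∈ Finset.range n, C (A.charpoly.coeff i) * X ^ i := by
    simp only [piCoef]
    rw [Fin.sum_univ_eq_sum_range (fun j =>
      C ((-1 : ℂ) ^ (j + 1) * ((-1 : ℂ) ^ (j + 1) * A.charpoly.coeff (n - (j + 1)))) *
        X ^ (n - (j + 1)))]
    rw [← Finset.sum_range_reflect (fun i => C (A.charpoly.coeff i) * X ^ i) n]
    refine Finset.sum_congr rfl fun j hj => ?_
    have hj' : n - 1 - j = n - (j + 1) := by omega
    rw [hj']
    congr 2
    rw [← mul_assoc, ← pow_add]
    rw [Even.neg_one_pow ⟨j + 1, by ring⟩, one_mul]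
  rw [Pv, key]
  conv_rhs => rw [hmon.as_sum, hdeg]

private theorem charpoly_Bmat (m : ℕ) (lam ζ : ℂ) :
    (Bmat (m + 2) lam ζ).charpoly = (X - C lam) ^ (m + 2) - C (ζ ^ (m + 1)) := by
  set B := Bmat (m + 2) lam ζ with hBdef
  have hBe : ∀ i j : Fin (m + 2), B i j =
      if (j : ℕ) = (i : ℕ) then lam
      else if (j : ℕ) = (i : ℕ) + 1 then (if (i : ℕ) = m then 1 else ζ)
      else if (i : ℕ) = m + 1 ∧ (j : ℕ) = 0 then ζ
      else 0 := fun i j => rfl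
  show (Matrix.charmatrix B).det = _
  rw [Matrix.det_succ_column_zero]
  rw [Fin.sum_univ_succ]
  -- the minor at 0
  have hminor0 :
      ((Matrix.charmatrix B).submatrix (Fin.succAbove 0) Fin.succ).det
        = (X - C lam) ^ (m + 1) := by
    have htri : ((Matrix.charmatrix B).submatrix (Fin.succAbove 0) Fin.succ).BlockTriangular id := by
      intro a b hab
      have hab' : (b : ℕ) < (a : ℕ) := hab
      simp only [Matrix.submatrix_apply, Fin.zero_succAbove]
      rw [Matrix.charmatrix_apply_ne _ _ _ (by
        simp only [ne_eq, Fin.ext_iff, Fin.val_succ]; omega)]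
      rw [hBe]
      simp only [Fin.val_succ]
      rw [if_neg (by omega), if_neg (by omega), if_neg (by omega)]
      simp
    rw [Matrix.det_of_upperTriangular htri]
    have hdiag : ∀ a : Fin (m + 1),
        ((Matrix.charmatrix B).submatrix (Fin.succAbove 0) Fin.succ) a a = X - C lam := by
      intro a
      simp only [Matrix.submatrix_apply, Fin.zero_succAbove]
      rw [Matrix.charmatrix_apply_eq]
      congr 1
      rw [hBe]
      simp
    calc (∏ a, ((Matrix.charmatrix B).submatrix (Fin.succAbove 0) Fin.succ) a a)
        = ∏ _a : Fin (m + 1), (X - C lam) := Finset.prod_congr rfl fun a _ => hdiag a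
      _ = (X - C lam) ^ (m + 1) := by simp
  -- the minor at the last row
  have hminorLast :
      ((Matrix.charmatrix B).submatrix (Fin.succAbove (Fin.last (m + 1))) Fin.succ).det
        = (- C ζ) ^ m * (-1) := by
    have htri : ((Matrix.charmatrix B).submatrix (Fin.succAbove (Fin.last (m + 1)))
        Fin.succ).BlockTriangular OrderDual.toDual := by
      intro a b hab
      have hab' : (a : ℕ) < (b : ℕ) := hab
      simp only [Matrix.submatrix_apply, Fin.succAbove_last]
      rw [Matrix.charmatrix_apply_ne _ _ _ (by
        simp only [ne_eq, Fin.ext_iff, Fin.val_succ, Fin.coe_castSucc]; omega)]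
      rw [hBe]
      simp only [Fin.val_succ, Fin.coe_castSucc]
      rw [if_neg (by omega), if_neg (by omega), if_neg (by omega)]
      simp
    rw [Matrix.det_of_lowerTriangular _ htri]
    have hdiag : ∀ a : Fin (m + 1),
        ((Matrix.charmatrix B).submatrix (Fin.succAbove (Fin.last (m + 1))) Fin.succ) a a
          = - C (if (a : ℕ) = m then (1:ℂ) else ζ) := by
      intro a
      simp only [Matrix.submatrix_apply, Fin.succAbove_last]
      rw [Matrix.charmatrix_apply_ne _ _ _ (by
        simp only [ne_eq, Fin.ext_iff, Fin.val_succ, Fin.coe_castSucc]; omega)]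
      congr 1
      rw [hBe]
      simp only [Fin.val_succ, Fin.coe_castSucc]
      rw [if_neg (by omega)]
      simp
    calc (∏ a, ((Matrix.charmatrix B).submatrix (Fin.succAbove (Fin.last (m + 1))) Fin.succ) a a)
        = ∏ a : Fin (m + 1), - C (if (a : ℕ) = m then (1:ℂ) else ζ) :=
          Finset.prod_congr rfl fun a _ => hdiag a
      _ = (∏ a : Fin m, - C (if ((Fin.castSucc a : Fin (m+1)) : ℕ) = m then (1:ℂ) else ζ)) *
            (- C (if ((Fin.last m : Fin (m+1)) : ℕ) = m then (1:ℂ) else ζ)) :=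
          Fin.prod_univ_castSucc _
      _ = (- C ζ) ^ m * (-1) := by
          have hfac : ∀ a : Fin m,
              - C (if ((Fin.castSucc a : Fin (m + 1)) : ℕ) = m then (1:ℂ) else ζ) = - C ζ := by
            intro a
            have hne : ((Fin.castSucc a : Fin (m + 1)) : ℕ) ≠ m := by
              simp only [Fin.coe_castSucc]
              exact a.isLt.ne
            rw [if_neg hne]
          rw [Finset.prod_congr rfl (fun a _ => hfac a)]
          rw [if_pos (Fin.val_last m)]
          simp
  -- column-zero entries
  have hcol0 : (Matrix.charmatrix B) 0 0 = X - C lam := by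
    rw [Matrix.charmatrix_apply_eq]; congr 1
  have hcolLast : (Matrix.charmatrix B) (Fin.last (m + 1)) 0 = - C ζ := by
    rw [Matrix.charmatrix_apply_ne _ _ _ (by
      intro h
      have h' := congrArg Fin.val h
      simp [Fin.val_last] at h')]
    congr 1
    rw [hBe]
    simp only [Fin.val_last, Fin.val_zero]
    rw [if_neg (by omega), if_neg (by omega), if_pos ⟨trivial, trivial⟩]
  -- kill all terms in the remaining sum except i = last
  rw [Finset.sum_eq_single_of_mem (Fin.last m) (Finset.mem_univ _) (fun b _ hb => by
    have hbv : (b : ℕ) ≠ m := fun h => hb (Fin.ext h)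
    have hzero : (Matrix.charmatrix B) (Fin.succ b) 0 = 0 := by
      rw [Matrix.charmatrix_apply_ne _ _ _ (Fin.succ_ne_zero b)]
      rw [hBe]
      simp only [Fin.val_succ, Fin.val_zero]
      rw [if_neg (by omega), if_neg (by omega), if_neg (by omega)]
      simp
    rw [hzero]
    ring)]
  rw [Fin.succ_last, hminor0, hminorLast, hcol0, hcolLast]
  simp only [Fin.val_zero, Fin.val_last, pow_zero, one_mul]
  rw [neg_pow (C ζ) m, map_pow]
  simp only [Nat.succ_eq_add_one]
  rcases Nat.even_or_odd m with hpar | hpar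
  · rw [hpar.neg_one_pow, Odd.neg_one_pow hpar.add_one]
    ring
  · rw [hpar.neg_one_pow, Even.neg_one_pow hpar.add_one]
    ring

private theorem charpoly_BmatPair (a b : ℕ) (lam1 lam2 ζ : ℂ) :
    (BmatPair (a + 2) (b + 2) lam1 lam2 ζ).charpoly =
      ((X - C lam1) ^ (a + 2) - C (ζ ^ (a + 1))) *
        ((X - C lam2) ^ (b + 2) - C (ζ ^ (b + 1))) := by
  rw [BmatPair, Matrix.charpoly_reindex, Matrix.charpoly_fromBlocks_zero₂₁,
    charpoly_Bmat, charpoly_Bmat]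

end AuxProofs

/-- for `φ(ζ) = π(diag(B_k^{λ_1}(εζ), B_l^{λ_2}(εζ)))` and any `g`
holomorphic near `0` with `g(0) = λ_1`, the function `ζ ↦ P_{[φ(ζ)]}(g(ζ))` vanishes
at `0` to order exactly `k - 1`. -/
theorem statement15 (k l : ℕ) (hk : 2 ≤ k) (hl : 2 ≤ l)
    (lam1 lam2 : ℂ) (hne : lam1 ≠ lam2) (ε : ℂ) (hε : ε ≠ 0)
    (g : ℂ → ℂ) (U : Set ℂ) (hU : U ∈ nhds (0 : ℂ))
    (hg : DifferentiableOn ℂ g U) (hg0 : g 0 = lam1) :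
    VanishesToOrder
      (fun ζ => (Pv (k + l) (piCoef (k + l) (BmatPair k l lam1 lam2 (ε * ζ)))).eval (g ζ))
      0 (k - 1) ∧
    iteratedDeriv (k - 1)
      (fun ζ => (Pv (k + l) (piCoef (k + l) (BmatPair k l lam1 lam2 (ε * ζ)))).eval (g ζ))
      0 ≠ 0 := by
  obtain ⟨m, rfl⟩ : ∃ m, k = m + 2 := ⟨k - 2, by omega⟩
  obtain ⟨b, rfl⟩ : ∃ b, l = b + 2 := ⟨l - 2, by omega⟩
  have hga : AnalyticAt ℂ g 0 := hg.analyticAt hU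
  obtain ⟨p, hp⟩ := hga
  have hga : AnalyticAt ℂ g 0 := ⟨p, hp⟩
  have hh1a : AnalyticAt ℂ (dslope g 0) 0 := ⟨_, hp.has_fpower_series_dslope_fslope⟩
  have hfact : ∀ ζ : ℂ, g ζ - lam1 = ζ * dslope g 0 ζ := by
    intro ζ
    have h := sub_smul_dslope g 0 ζ
    rw [sub_zero, smul_eq_mul, hg0] at h
    exact h.symm
  have hua : AnalyticAt ℂ (fun ζ : ℂ =>
      (ζ * (dslope g 0 ζ) ^ (m + 2) - ε ^ (m + 1)) *
        ((g ζ - lam2) ^ (b + 2) - ε ^ (b + 1) * ζ ^ (b + 1))) 0 := by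
    apply AnalyticAt.mul
    · exact (analyticAt_id.mul (hh1a.pow _)).sub analyticAt_const
    · exact ((hga.sub analyticAt_const).pow _).sub
        (analyticAt_const.mul (analyticAt_id.pow _))
  have hfeq : (fun ζ => (Pv (m + 2 + (b + 2)) (piCoef (m + 2 + (b + 2))
        (BmatPair (m + 2) (b + 2) lam1 lam2 (ε * ζ)))).eval (g ζ)) =
      fun ζ : ℂ => ζ ^ (m + 1) *
        ((ζ * (dslope g 0 ζ) ^ (m + 2) - ε ^ (m + 1)) *
          ((g ζ - lam2) ^ (b + 2) - ε ^ (b + 1) * ζ ^ (b + 1))) := by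
    funext ζ
    rw [Pv_piCoef, charpoly_BmatPair]
    simp only [eval_mul, eval_sub, eval_pow, eval_X, eval_C]
    rw [show (g ζ - lam1) = ζ * dslope g 0 ζ from hfact ζ]
    ring
  obtain ⟨hvan, htop⟩ := vanish_aux (m + 1) _ _ hua (Filter.Eventually.of_forall fun ζ => congrFun hfeq ζ)
  have hu0 : (0 * (dslope g 0 0) ^ (m + 2) - ε ^ (m + 1)) *
      ((g 0 - lam2) ^ (b + 2) - ε ^ (b + 1) * 0 ^ (b + 1)) ≠ 0 := by
    rw [hg0, zero_pow (Nat.succ_ne_zero b)]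
    have h1 : (0 : ℂ) * (dslope g 0 0) ^ (m + 2) - ε ^ (m + 1) = -ε ^ (m + 1) := by ring
    have h2 : (lam1 - lam2) ^ (b + 2) - ε ^ (b + 1) * 0 = (lam1 - lam2) ^ (b + 2) := by ring
    rw [h1, h2]
    exact mul_ne_zero (neg_ne_zero.mpr (pow_ne_zero _ hε))
      (pow_ne_zero _ (sub_ne_zero.mpr hne))
  constructor
  · intro i hi
    exact hvan i (by omega)
  · have hidx : m + 2 - 1 = m + 1 := rfl
    rw [hidx, htop]
    exact mul_ne_zero (Nat.cast_ne_zero.mpr (Nat.factorial_ne_zero _)) hu0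
end
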